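/- Let n ≥ 2, a ≥ 1, let D ⊊ ℝⁿ be a domain, let α be an a-cone arc in D joining x and y, and let s₀ ∈ α bisect α, i.e. ℓ(α[x,s₀]) = ℓ(α[s₀,y]). Then for every z ∈ α[x,s₀], k_D(x,z) ≤ ℓ_k(α[x,z]) ≤ 2a·log(1 + 2·ℓ(α[x,z])/d(x)), and symmetrically, for every z ∈ α[s₀,y], k_D(y,z) ≤ ℓ_k(α[y,z]) ≤ 2a·log(1 + 2·ℓ(α[y,z])/d(y)). (These are inequalities (3.16).) -/

import Mathlib

open Set Metric MeasureTheory

noncomputable section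

/-- Distance from a point to the boundary of `D`, i.e. to its complement. -/
def distBd {n : ℕ} (D : Set (EuclideanSpace ℝ (Fin n))) (z : EuclideanSpace ℝ (Fin n)) : ℝ :=
  infDist z Dᶜ

/-- A domain in ℝⁿ: a nonempty, open, connected, proper subset. -/
def IsProperDomain {n : ℕ} (D : Set (EuclideanSpace ℝ (Fin n))) : Prop :=
  IsOpen D ∧ IsConnected D ∧ D ≠ univ

/-- A rectifiable arc in `D`, parametrized by arclength on `[0, len]`:
the length of the subarc between parameters `s ≤ t` is exactly `t - s`. -/
structure Arc (n : ℕ) (D : Set (EuclideanSpace ℝ (Fin n))) where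
  len : ℝ
  len_nonneg : 0 ≤ len
  toFun : ℝ → EuclideanSpace ℝ (Fin n)
  injOn : InjOn toFun (Icc 0 len)
  mem : ∀ t ∈ Icc 0 len, toFun t ∈ D
  unitSpeed : ∀ s ∈ Icc 0 len, ∀ t ∈ Icc 0 len, s ≤ t →
    eVariationOn toFun (Icc s t) = ENNReal.ofReal (t - s)

namespace Arc

variable {n : ℕ} {D : Set (EuclideanSpace ℝ (Fin n))}

/-- The arc `γ` joins `x` to `y`. -/
def Joins (γ : Arc n D) (x y : EuclideanSpace ℝ (Fin n)) : Prop :=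
  γ.toFun 0 = x ∧ γ.toFun γ.len = y

/-- Quasihyperbolic length of the subarc of `γ` between parameters `u` and `v`:
`∫ |dz| / d(z)` along the (unit-speed) subarc. -/
def qhLen (γ : Arc n D) (u v : ℝ) : ℝ :=
  ∫ t in u..v, 1 / distBd D (γ.toFun t)

end Arc

/-- Quasihyperbolic distance in `D`. -/
def qhDist {n : ℕ} (D : Set (EuclideanSpace ℝ (Fin n))) (x y : EuclideanSpace ℝ (Fin n)) : ℝ :=
  sInf { r | ∃ γ : Arc n D, γ.Joins x y ∧ r = γ.qhLen 0 γ.len }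

/-- Inner (internal) distance in `D`: infimum of lengths of arcs joining the two points. -/
def innerDist {n : ℕ} (D : Set (EuclideanSpace ℝ (Fin n))) (x y : EuclideanSpace ℝ (Fin n)) : ℝ :=
  sInf { r | ∃ γ : Arc n D, γ.Joins x y ∧ r = γ.len }

namespace Arc

variable {n : ℕ} {D : Set (EuclideanSpace ℝ (Fin n))}

/-- `γ` is a quasihyperbolic geodesic: its quasihyperbolic length realizes the
quasihyperbolic distance between its endpoints. -/
def IsGeodesic (γ : Arc n D) : Prop :=
  γ.qhLen 0 γ.len = qhDist D (γ.toFun 0) (γ.toFun γ.len)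

/-- `γ` is a `c`-cone arc: `min (ℓ(γ[z₁,z]), ℓ(γ[z₂,z])) ≤ c·d(z)` for all `z ∈ γ`. -/
def IsConeArc (γ : Arc n D) (c : ℝ) : Prop :=
  ∀ t ∈ Icc 0 γ.len, min t (γ.len - t) ≤ c * distBd D (γ.toFun t)

end Arc

/-- `D` is an `a`-John domain. -/
def IsJohn {n : ℕ} (D : Set (EuclideanSpace ℝ (Fin n))) (a : ℝ) : Prop :=
  ∀ x ∈ D, ∀ y ∈ D, ∃ γ : Arc n D, γ.Joins x y ∧ γ.IsConeArc a

/-- `D` is a `c`-uniform domain. -/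
def IsUniform {n : ℕ} (D : Set (EuclideanSpace ℝ (Fin n))) (c : ℝ) : Prop :=
  ∀ x ∈ D, ∀ y ∈ D, ∃ γ : Arc n D, γ.Joins x y ∧ γ.IsConeArc c ∧ γ.len ≤ c * dist x y

/-- `f : D → D'` is an `(M,C)`-CQH homeomorphism (a homeomorphism of `D` onto `D'`
satisfying the coarse quasihyperbolic bi-Lipschitz condition). -/
def IsCQH {n : ℕ} (D D' : Set (EuclideanSpace ℝ (Fin n)))
    (f : EuclideanSpace ℝ (Fin n) → EuclideanSpace ℝ (Fin n)) (M C : ℝ) : Prop :=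
  ContinuousOn f D ∧ BijOn f D D' ∧
  ∀ x ∈ D, ∀ y ∈ D,
    (qhDist D x y - C) / M ≤ qhDist D' (f x) (f y) ∧
    qhDist D' (f x) (f y) ≤ M * qhDist D x y + C

namespace Arc

variable {n : ℕ} {D : Set (EuclideanSpace ℝ (Fin n))}

lemma dist_le' (α : Arc n D) {s t : ℝ} (hs : s ∈ Icc 0 α.len) (ht : t ∈ Icc 0 α.len)
    (hst : s ≤ t) : dist (α.toFun s) (α.toFun t) ≤ t - s := by
  have h := eVariationOn.edist_le α.toFun (s := Icc s t) (x := s) (y := t)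
    ⟨le_rfl, hst⟩ ⟨hst, le_rfl⟩
  rw [α.unitSpeed s hs t ht hst, edist_dist] at h
  exact (ENNReal.ofReal_le_ofReal_iff (by linarith)).mp h

lemma lipschitzOn' (α : Arc n D) : LipschitzOnWith 1 α.toFun (Icc 0 α.len) := by
  apply LipschitzOnWith.of_dist_le_mul
  intro u hu v hv
  rcases le_total u v with h | h
  · calc dist (α.toFun u) (α.toFun v) ≤ v - u := α.dist_le' hu hv h
      _ ≤ 1 * dist u v := by rw [one_mul, Real.dist_eq, abs_sub_comm]; exact le_abs_self _
  · rw [dist_comm]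
    calc dist (α.toFun v) (α.toFun u) ≤ u - v := α.dist_le' hv hu h
      _ ≤ 1 * dist u v := by rw [one_mul, Real.dist_eq]; exact le_abs_self _

/-- The reversed arc. -/
def reverse (α : Arc n D) : Arc n D where
  len := α.len
  len_nonneg := α.len_nonneg
  toFun := fun s => α.toFun (α.len - s)
  injOn := by
    intro u hu v hv h
    have hu' : α.len - u ∈ Icc 0 α.len := ⟨by linarith [hu.2], by linarith [hu.1]⟩
    have hv' : α.len - v ∈ Icc 0 α.len := ⟨by linarith [hv.2], by linarith [hv.1]⟩
    have := α.injOn hu' hv' h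
    linarith
  mem := fun t ht => α.mem _ ⟨by linarith [ht.2], by linarith [ht.1]⟩
  unitSpeed := by
    intro s hs t ht hst
    have heq : (fun u : ℝ => α.toFun (α.len - u)) = α.toFun ∘ (fun u => α.len - u) := rfl
    rw [heq, eVariationOn.comp_eq_of_antitoneOn α.toFun _
      (fun u _ v _ huv => by exact sub_le_sub_left huv _), Set.image_const_sub_Icc]
    have h2 := α.unitSpeed (α.len - t) ⟨by linarith [ht.2], by linarith [ht.1]⟩
      (α.len - s) ⟨by linarith [hs.2], by linarith [hs.1]⟩ (by linarith)
    rw [h2]; ring_nf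

end Arc

section Aux3_16
variable {n : ℕ} {D : Set (EuclideanSpace ℝ (Fin n))}

lemma distBd_pos (hD : IsProperDomain D) {z : EuclideanSpace ℝ (Fin n)} (hz : z ∈ D) :
    0 < distBd D z := by
  have hne : Dᶜ.Nonempty := Set.nonempty_compl.mpr hD.2.2
  exact (hD.1.isClosed_compl.notMem_iff_infDist_pos hne).mp (by simpa using hz)

lemma qhDist_le_of_joins {x z : EuclideanSpace ℝ (Fin n)} (γ : Arc n D) (h : γ.Joins x z) :
    qhDist D x z ≤ γ.qhLen 0 γ.len := by
  apply csInf_le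
  · refine ⟨0, fun r hr => ?_⟩
    obtain ⟨β, -, rfl⟩ := hr
    exact intervalIntegral.integral_nonneg β.len_nonneg
      (fun s _ => one_div_nonneg.mpr Metric.infDist_nonneg)
  · exact ⟨γ, h, rfl⟩

lemma half_bound (a : ℝ) (ha : 1 ≤ a) (hD : IsProperDomain D) (α : Arc n D)
    (x : EuclideanSpace ℝ (Fin n)) (hx0 : α.toFun 0 = x)
    (t₀ : ℝ) (ht₀ : t₀ ∈ Icc 0 α.len)
    (hcone : ∀ t ∈ Icc (0:ℝ) t₀, t ≤ a * distBd D (α.toFun t)) :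
    ∀ t ∈ Icc (0:ℝ) t₀,
      qhDist D x (α.toFun t) ≤ α.qhLen 0 t ∧
      α.qhLen 0 t ≤ 2 * a * Real.log (1 + 2 * t / distBd D x) := by
  intro t ht
  have htlen : t ≤ α.len := ht.2.trans ht₀.2
  have hsub : Icc (0:ℝ) t ⊆ Icc 0 α.len := Icc_subset_Icc le_rfl htlen
  have hxD : x ∈ D := hx0 ▸ α.mem 0 ⟨le_rfl, α.len_nonneg⟩
  set dx := distBd D x with hdx_def
  have hdx : 0 < dx := distBd_pos hD hxD
  have ha0 : (0:ℝ) < a := lt_of_lt_of_le one_pos ha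
  have hcont : ContinuousOn (fun s => distBd D (α.toFun s)) (Icc 0 α.len) :=
    (continuous_infDist_pt Dᶜ).comp_continuousOn α.lipschitzOn'.continuousOn
  have hdpos : ∀ s ∈ Icc 0 α.len, 0 < distBd D (α.toFun s) :=
    fun s hs => distBd_pos hD (α.mem s hs)
  have hcont1 : ContinuousOn (fun s => 1 / distBd D (α.toFun s)) (Icc 0 α.len) :=
    continuousOn_const.div hcont (fun s hs => (hdpos s hs).ne')
  have hInt1 : IntervalIntegrable (fun s => 1 / distBd D (α.toFun s)) volume 0 t :=
    (hcont1.mono hsub).intervalIntegrable_of_Icc ht.1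
  have hInt2 : IntervalIntegrable (fun s => 4 * a / (dx + 2 * s)) volume 0 t := by
    apply ContinuousOn.intervalIntegrable_of_Icc ht.1
    apply continuousOn_const.div (by fun_prop)
    intro s hs
    nlinarith [hs.1]
  have hpt : ∀ s ∈ Icc (0:ℝ) t, 1 / distBd D (α.toFun s) ≤ 4 * a / (dx + 2 * s) := by
    intro s hs
    have hs' : s ∈ Icc (0:ℝ) t₀ := ⟨hs.1, hs.2.trans ht.2⟩
    set d := distBd D (α.toFun s) with hd_def
    have hd : 0 < d := hdpos s (hsub hs)
    have h1 : s ≤ a * d := hcone s hs'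
    have h2 : dx - s ≤ d := by
      have hle : dx ≤ d + dist x (α.toFun s) := infDist_le_infDist_add_dist
      have := α.dist_le' (s := 0) (t := s) ⟨le_rfl, α.len_nonneg⟩ (hsub hs) hs.1
      rw [hx0] at this
      linarith
    have hden : (0:ℝ) < dx + 2 * s := by nlinarith [hs.1]
    rw [div_le_div_iff₀ hd hden]
    have key : dx + 2 * s ≤ 4 * a * d := by
      rcases le_total s dx with hcase | hcase
      · have hB : a * (dx - s) ≤ a * d := mul_le_mul_of_nonneg_left h2 ha0.le
        have hC : 0 ≤ (a - 1) * (dx - s) :=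
          mul_nonneg (by linarith) (by linarith)
        nlinarith
      · nlinarith [hs.1]
    nlinarith
  constructor
  · refine qhDist_le_of_joins
      ⟨t, ht.1, α.toFun, α.injOn.mono hsub, fun s hs => α.mem s (hsub hs),
        fun s hs u hu hsu => α.unitSpeed s (hsub hs) u (hsub hu) hsu⟩ ⟨hx0, rfl⟩
  · have hmono : α.qhLen 0 t ≤ ∫ s in (0:ℝ)..t, 4 * a / (dx + 2 * s) :=
      intervalIntegral.integral_mono_on ht.1 hInt1 hInt2 hpt
    have hcomp : (∫ s in (0:ℝ)..t, 4 * a / (dx + 2 * s))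
        = 2 * a * Real.log (dx + 2 * t) - 2 * a * Real.log (dx + 2 * 0) := by
      apply intervalIntegral.integral_eq_sub_of_hasDerivAt
      · intro s hs
        rw [uIcc_of_le ht.1] at hs
        have hpos : (0:ℝ) < dx + 2 * s := by nlinarith [hs.1]
        have hin : HasDerivAt (fun u : ℝ => dx + 2 * u) 2 s := by
          have h := ((hasDerivAt_id' s).const_mul (2:ℝ)).const_add dx
          rwa [mul_one] at h
        have hlog : HasDerivAt (fun u : ℝ => Real.log (dx + 2 * u)) ((dx + 2 * s)⁻¹ * 2) s :=
          (hin.log hpos.ne').congr_deriv (by ring)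
        have := hlog.const_mul (2 * a)
        exact this.congr_deriv (by rw [div_eq_mul_inv]; ring)
      · exact hInt2
    have hrw : (1 : ℝ) + 2 * t / dx = (dx + 2 * t) / dx := by field_simp
    rw [hcomp] at hmono
    rw [hrw, Real.log_div (by nlinarith [ht.1]) hdx.ne']
    have hz : Real.log (dx + 2 * 0) = Real.log dx := by norm_num
    rw [hz] at hmono
    linarith [hmono]

end Aux3_16

/-- **Inequalities (3.16).** Let `D ⊊ ℝⁿ` (`n ≥ 2`) be a domain, `α` an `a`-cone arc
(`a ≥ 1`) joining `x` and `y` in `D`, and let `s₀ = α(t₀)` bisect `α`.  Then for every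
`z ∈ α[x,s₀]`: `k_D(x,z) ≤ ℓ_k(α[x,z]) ≤ 2a·log(1 + 2ℓ(α[x,z])/d(x))`, and symmetrically
for every `z ∈ α[s₀,y]`. -/
theorem ineq_3_16 (n : ℕ) (hn : 2 ≤ n) (a : ℝ) (ha : 1 ≤ a)
    (D : Set (EuclideanSpace ℝ (Fin n))) (hD : IsProperDomain D)
    (α : Arc n D) (x y : EuclideanSpace ℝ (Fin n)) (hxy : α.Joins x y)
    (hcone : α.IsConeArc a)
    (t₀ : ℝ) (ht₀ : t₀ ∈ Icc (0:ℝ) α.len) (hbis : t₀ = α.len - t₀) :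
    (∀ t ∈ Icc (0:ℝ) t₀,
      qhDist D x (α.toFun t) ≤ α.qhLen 0 t ∧
      α.qhLen 0 t ≤ 2 * a * Real.log (1 + 2 * t / distBd D x)) ∧
    (∀ t ∈ Icc t₀ α.len,
      qhDist D y (α.toFun t) ≤ α.qhLen t α.len ∧
      α.qhLen t α.len ≤ 2 * a * Real.log (1 + 2 * (α.len - t) / distBd D y)) := by
  have hlb : t₀ = α.len - t₀ := hbis
  constructor
  · apply half_bound a ha hD α x hxy.1 t₀ ht₀
    intro t ht
    have h := hcone t ⟨ht.1, ht.2.trans ht₀.2⟩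
    have hmin : min t (α.len - t) = t := min_eq_left (by linarith [ht.2])
    rwa [hmin] at h
  · have hβ0 : (α.reverse).toFun 0 = y := by
      show α.toFun (α.len - 0) = y
      rw [sub_zero]; exact hxy.2
    have ht₀' : t₀ ∈ Icc (0:ℝ) (α.reverse).len := ht₀
    have hconeβ : ∀ u ∈ Icc (0:ℝ) t₀, u ≤ a * distBd D ((α.reverse).toFun u) := by
      intro u hu
      have h := hcone (α.len - u) ⟨by linarith [hu.2, ht₀.2], by linarith [hu.1]⟩
      have hmin : min (α.len - u) (α.len - (α.len - u)) = u := by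
        rw [show α.len - (α.len - u) = u by ring]
        exact min_eq_right (by linarith [hu.2])
      rw [hmin] at h
      exact h
    have H := half_bound a ha hD α.reverse y hβ0 t₀ ht₀' hconeβ
    intro t ht
    have hu : α.len - t ∈ Icc (0:ℝ) t₀ := ⟨by linarith [ht.2], by linarith [ht.1]⟩
    obtain ⟨HA, HB⟩ := H (α.len - t) hu
    have hfun : (α.reverse).toFun (α.len - t) = α.toFun t := by
      show α.toFun (α.len - (α.len - t)) = α.toFun t
      congr 1; ring
    have hq : (α.reverse).qhLen 0 (α.len - t) = α.qhLen t α.len := by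
      show (∫ s in (0:ℝ)..(α.len - t), 1 / distBd D (α.toFun (α.len - s))) = _
      rw [intervalIntegral.integral_comp_sub_left
        (fun r => 1 / distBd D (α.toFun r)) α.len]
      rw [show α.len - (α.len - t) = t by ring, sub_zero]
      rfl
    rw [hfun, hq] at HA
    rw [hq] at HB
    exact ⟨HA, HB⟩
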